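/- Let J be a 2×2 complex matrix with det J = 1 (an element of SL(2,ℂ)), and define the 4×4 matrix M by M_{ij} = (1/2) tr(σ_i J σ_j J†) for i, j ∈ {0,1,2,3}, where J† is the conjugate transpose. Then every entry M_{ij} is real, M satisfies the Lorentz condition MᵀGM = G, det M = 1, and M₀₀ > 0; that is, the Mueller–Jones matrix associated with a unit-determinant Jones matrix belongs to the proper orthochronous Lorentz group SO⁺(1,3). -/

import Mathlib

open Matrix

/-- The Minkowski metric matrix G = diag(1, -1, -1, -1). -/
noncomputable def G : Matrix (Fin 4) (Fin 4) ℝ := Matrix.diagonal ![1, -1, -1, -1]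

/-- The Pauli matrices σ₀, σ₁, σ₂, σ₃. -/
noncomputable def pauli : Fin 4 → Matrix (Fin 2) (Fin 2) ℂ :=
  ![!![1, 0; 0, 1], !![1, 0; 0, -1], !![0, 1; 1, 0], !![0, -Complex.I; Complex.I, 0]]

/-- The (complex-valued expression of the) Mueller–Jones matrix of a Jones matrix J:
M_{ij} = (1/2) tr(σ_i J σ_j J†). -/
noncomputable def muellerJonesC (J : Matrix (Fin 2) (Fin 2) ℂ) : Matrix (Fin 4) (Fin 4) ℂ :=
  Matrix.of fun i j => (1 / 2 : ℂ) * (pauli i * J * pauli j * Jᴴ).trace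

/-- The real Mueller–Jones matrix (real parts of the entries). -/
noncomputable def muellerJones (J : Matrix (Fin 2) (Fin 2) ℂ) : Matrix (Fin 4) (Fin 4) ℝ :=
  Matrix.of fun i j => (muellerJonesC J i j).re

/-- Explicit cofactor expansion of a 4×4 determinant. -/
lemma det_four (A : Matrix (Fin 4) (Fin 4) ℝ) :
    A.det =
      A 0 0 * (A 1 1 * (A 2 2 * A 3 3 - A 2 3 * A 3 2) - A 1 2 * (A 2 1 * A 3 3 - A 2 3 * A 3 1)
        + A 1 3 * (A 2 1 * A 3 2 - A 2 2 * A 3 1))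
      - A 0 1 * (A 1 0 * (A 2 2 * A 3 3 - A 2 3 * A 3 2) - A 1 2 * (A 2 0 * A 3 3 - A 2 3 * A 3 0)
        + A 1 3 * (A 2 0 * A 3 2 - A 2 2 * A 3 0))
      + A 0 2 * (A 1 0 * (A 2 1 * A 3 3 - A 2 3 * A 3 1) - A 1 1 * (A 2 0 * A 3 3 - A 2 3 * A 3 0)
        + A 1 3 * (A 2 0 * A 3 1 - A 2 1 * A 3 0))
      - A 0 3 * (A 1 0 * (A 2 1 * A 3 2 - A 2 2 * A 3 1) - A 1 1 * (A 2 0 * A 3 2 - A 2 2 * A 3 0)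
        + A 1 2 * (A 2 0 * A 3 1 - A 2 1 * A 3 0)) := by
  have h1 : (2 : Fin 3).succ = 3 := rfl
  have h2 : Fin.ofNat 4 ((2 : Fin 3) : ℕ) = 2 := rfl
  have h3 : Fin.succAbove (2 : Fin 3) 2 = 3 := rfl
  have h4 : Fin.succAbove (1 : Fin 3) 2 = 3 := rfl
  have h5 : Fin.castSucc (2 : Fin 3) = 2 := rfl
  have h6 : Fin.succAbove (1 : Fin 4) (2 : Fin 3) = 3 := rfl
  have h7 : Fin.succAbove (2 : Fin 4) (2 : Fin 3) = 3 := rfl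
  have h8 : Fin.succAbove (3 : Fin 4) (2 : Fin 3) = 2 := rfl
  simp [Matrix.det_succ_row_zero, Fin.sum_univ_succ, h1, h2, h3, h4, h5, h6, h7, h8]
  ring

set_option maxHeartbeats 4000000 in
/-- The Mueller–Jones matrix of a unit-determinant Jones matrix has real entries and
belongs to the proper orthochronous Lorentz group SO⁺(1,3): MᵀGM = G, det M = 1, M₀₀ > 0. -/
theorem muellerJones_mem_restricted_lorentz
    (J : Matrix (Fin 2) (Fin 2) ℂ) (hJ : J.det = 1) :
    (∀ i j : Fin 4, (muellerJonesC J i j).im = 0) ∧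
    (muellerJones J)ᵀ * G * muellerJones J = G ∧
    (muellerJones J).det = 1 ∧
    0 < muellerJones J 0 0 := by
  obtain ⟨a, b, c, d, rfl⟩ : ∃ a b c d, J = !![a, b; c, d] :=
    ⟨J 0 0, J 0 1, J 1 0, J 1 1, Matrix.eta_fin_two J⟩
  rw [Matrix.det_fin_two_of] at hJ
  obtain ⟨hre, him⟩ := Complex.ext_iff.mp hJ
  simp [Complex.mul_re, Complex.mul_im] at hre him
  have e00 : muellerJones !![a, b; c, d] 0 0 = 1/2*a.im*a.im + 1/2*a.re*a.re + 1/2*b.im*b.im + 1/2*b.re*b.re + 1/2*c.im*c.im + 1/2*c.re*c.re + 1/2*d.im*d.im + 1/2*d.re*d.re := by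
    simp [muellerJones, muellerJonesC, pauli, Matrix.trace, Matrix.mul_apply,
      Fin.sum_univ_succ, Matrix.conjTranspose_apply]
    ring
  have e01 : muellerJones !![a, b; c, d] 0 1 = 1/2*a.im*a.im + 1/2*a.re*a.re - 1/2*b.im*b.im - 1/2*b.re*b.re + 1/2*c.im*c.im + 1/2*c.re*c.re - 1/2*d.im*d.im - 1/2*d.re*d.re := by
    simp [muellerJones, muellerJonesC, pauli, Matrix.trace, Matrix.mul_apply,
      Fin.sum_univ_succ, Matrix.conjTranspose_apply]
    ring
  have e02 : muellerJones !![a, b; c, d] 0 2 = a.im*b.im + a.re*b.re + c.im*d.im + c.re*d.re := by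
    simp [muellerJones, muellerJonesC, pauli, Matrix.trace, Matrix.mul_apply,
      Fin.sum_univ_succ, Matrix.conjTranspose_apply]
    ring
  have e03 : muellerJones !![a, b; c, d] 0 3 = a.im*b.re - a.re*b.im + c.im*d.re - c.re*d.im := by
    simp [muellerJones, muellerJonesC, pauli, Matrix.trace, Matrix.mul_apply,
      Fin.sum_univ_succ, Matrix.conjTranspose_apply]
    ring
  have e10 : muellerJones !![a, b; c, d] 1 0 = 1/2*a.im*a.im + 1/2*a.re*a.re + 1/2*b.im*b.im + 1/2*b.re*b.re - 1/2*c.im*c.im - 1/2*c.re*c.re - 1/2*d.im*d.im - 1/2*d.re*d.re := by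
    simp [muellerJones, muellerJonesC, pauli, Matrix.trace, Matrix.mul_apply,
      Fin.sum_univ_succ, Matrix.conjTranspose_apply]
    ring
  have e11 : muellerJones !![a, b; c, d] 1 1 = 1/2*a.im*a.im + 1/2*a.re*a.re - 1/2*b.im*b.im - 1/2*b.re*b.re - 1/2*c.im*c.im - 1/2*c.re*c.re + 1/2*d.im*d.im + 1/2*d.re*d.re := by
    simp [muellerJones, muellerJonesC, pauli, Matrix.trace, Matrix.mul_apply,
      Fin.sum_univ_succ, Matrix.conjTranspose_apply]
    ring
  have e12 : muellerJones !![a, b; c, d] 1 2 = a.im*b.im + a.re*b.re - c.im*d.im - c.re*d.re := by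
    simp [muellerJones, muellerJonesC, pauli, Matrix.trace, Matrix.mul_apply,
      Fin.sum_univ_succ, Matrix.conjTranspose_apply]
    ring
  have e13 : muellerJones !![a, b; c, d] 1 3 = a.im*b.re - a.re*b.im - c.im*d.re + c.re*d.im := by
    simp [muellerJones, muellerJonesC, pauli, Matrix.trace, Matrix.mul_apply,
      Fin.sum_univ_succ, Matrix.conjTranspose_apply]
    ring
  have e20 : muellerJones !![a, b; c, d] 2 0 = a.im*c.im + a.re*c.re + b.im*d.im + b.re*d.re := by
    simp [muellerJones, muellerJonesC, pauli, Matrix.trace, Matrix.mul_apply,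
      Fin.sum_univ_succ, Matrix.conjTranspose_apply]
    ring
  have e21 : muellerJones !![a, b; c, d] 2 1 = a.im*c.im + a.re*c.re - b.im*d.im - b.re*d.re := by
    simp [muellerJones, muellerJonesC, pauli, Matrix.trace, Matrix.mul_apply,
      Fin.sum_univ_succ, Matrix.conjTranspose_apply]
    ring
  have e22 : muellerJones !![a, b; c, d] 2 2 = a.im*d.im + a.re*d.re + b.im*c.im + b.re*c.re := by
    simp [muellerJones, muellerJonesC, pauli, Matrix.trace, Matrix.mul_apply,
      Fin.sum_univ_succ, Matrix.conjTranspose_apply]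
    ring
  have e23 : muellerJones !![a, b; c, d] 2 3 = a.im*d.re - a.re*d.im - b.im*c.re + b.re*c.im := by
    simp [muellerJones, muellerJonesC, pauli, Matrix.trace, Matrix.mul_apply,
      Fin.sum_univ_succ, Matrix.conjTranspose_apply]
    ring
  have e30 : muellerJones !![a, b; c, d] 3 0 = -a.im*c.re + a.re*c.im - b.im*d.re + b.re*d.im := by
    simp [muellerJones, muellerJonesC, pauli, Matrix.trace, Matrix.mul_apply,
      Fin.sum_univ_succ, Matrix.conjTranspose_apply]
    ring
  have e31 : muellerJones !![a, b; c, d] 3 1 = -a.im*c.re + a.re*c.im + b.im*d.re - b.re*d.im := by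
    simp [muellerJones, muellerJonesC, pauli, Matrix.trace, Matrix.mul_apply,
      Fin.sum_univ_succ, Matrix.conjTranspose_apply]
    ring
  have e32 : muellerJones !![a, b; c, d] 3 2 = -a.im*d.re + a.re*d.im - b.im*c.re + b.re*c.im := by
    simp [muellerJones, muellerJonesC, pauli, Matrix.trace, Matrix.mul_apply,
      Fin.sum_univ_succ, Matrix.conjTranspose_apply]
    ring
  have e33 : muellerJones !![a, b; c, d] 3 3 = a.im*d.im + a.re*d.re - b.im*c.im - b.re*c.re := by
    simp [muellerJones, muellerJonesC, pauli, Matrix.trace, Matrix.mul_apply,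
      Fin.sum_univ_succ, Matrix.conjTranspose_apply]
    ring
  refine ⟨?_, ?_, ?_, ?_⟩
  · intro i j
    fin_cases i <;> fin_cases j <;>
    · simp [muellerJonesC, pauli, Matrix.trace, Matrix.mul_apply, Fin.sum_univ_succ,
        Matrix.conjTranspose_apply]
      ring
  · ext i j
    fin_cases i <;> fin_cases j <;>
    · simp [Matrix.mul_apply, Matrix.transpose_apply, G, Matrix.diagonal, Fin.sum_univ_succ,
        (show (2 : Fin 3).succ = 3 from rfl),
        e00, e01, e02, e03, e10, e11, e12, e13, e20, e21, e22, e23, e30, e31, e32, e33]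
      first
      | ring1
      | linear_combination
          ((a.re*d.re - a.im*d.im - b.re*c.re + b.im*c.im) + 1) * hre +
          (a.re*d.im + a.im*d.re - b.re*c.im - b.im*c.re) * him
      | linear_combination
          (-((a.re*d.re - a.im*d.im - b.re*c.re + b.im*c.im) + 1)) * hre +
          (-(a.re*d.im + a.im*d.re - b.re*c.im - b.im*c.re)) * him
  · rw [det_four]
    rw [e00, e01, e02, e03, e10, e11, e12, e13, e20, e21, e22, e23, e30, e31, e32, e33]
    linear_combination
      (((a.re*d.re - a.im*d.im - b.re*c.re + b.im*c.im)^2 +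
        (a.re*d.im + a.im*d.re - b.re*c.im - b.im*c.re)^2 + 1) *
        ((a.re*d.re - a.im*d.im - b.re*c.re + b.im*c.im) + 1)) * hre +
      (((a.re*d.re - a.im*d.im - b.re*c.re + b.im*c.im)^2 +
        (a.re*d.im + a.im*d.re - b.re*c.im - b.im*c.re)^2 + 1) *
        (a.re*d.im + a.im*d.re - b.re*c.im - b.im*c.re)) * him
  · rw [e00]
    nlinarith [sq_nonneg (a.re - d.re), sq_nonneg (a.im + d.im),
      sq_nonneg (b.re + c.re), sq_nonneg (b.im - c.im), hre]
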